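/- Let (Ω, ℱ) be a measurable space, let V be a real Hilbert space, and let A : Ω → (V →L[ℝ] V) be a strongly measurable map. Assume there are constants 0 < γ ≤ Γ such that for every ω ∈ Ω: ⟪A(ω)v, v⟫ ≥ γ‖v‖² for all v ∈ V, and ‖A(ω)‖ ≤ Γ. Let W be a closed subspace of V and fix u ∈ V. Then for every ω there is a unique element C(ω)u ∈ W satisfying ⟪A(ω)·(C(ω)u), w⟫ = ⟪A(ω)u, w⟫ for all w ∈ W; moreover ‖C(ω)u‖ ≤ (Γ/γ)·‖u‖ for every ω, and the map ω ↦ C(ω)u is strongly measurable. -/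

import Mathlib

open MeasureTheory
open scoped RealInnerProductSpace

/-- Well-posedness and measurable dependence of the corrector problems: for a strongly
measurable family of uniformly bounded, uniformly coercive operators `A(ω)` and a closed
subspace `W`, there is a unique `C(ω)u ∈ W` with `⟪A(ω)C(ω)u, w⟫ = ⟪A(ω)u, w⟫` for all
`w ∈ W`; it satisfies `‖C(ω)u‖ ≤ (Γ/γ)‖u‖` and `ω ↦ C(ω)u` is strongly measurable. -/
theorem corrector_measurable_wellposed
    {Ω : Type*} [MeasurableSpace Ω]
    {V : Type*} [NormedAddCommGroup V] [InnerProductSpace ℝ V] [CompleteSpace V]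
    (A : Ω → V →L[ℝ] V) (hA : StronglyMeasurable A)
    (γ Γ : ℝ) (hγ : 0 < γ) (hγΓ : γ ≤ Γ)
    (hcoer : ∀ ω (v : V), γ * ‖v‖ ^ 2 ≤ ⟪A ω v, v⟫)
    (hbdd : ∀ ω, ‖A ω‖ ≤ Γ)
    (W : Submodule ℝ V) (hW : IsClosed (W : Set V)) (u : V) :
    ∃ Cu : Ω → V,
      StronglyMeasurable Cu ∧
      (∀ ω, Cu ω ∈ W) ∧
      (∀ ω, ∀ w ∈ W, ⟪A ω (Cu ω), w⟫ = ⟪A ω u, w⟫) ∧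
      (∀ ω, ‖Cu ω‖ ≤ (Γ / γ) * ‖u‖) ∧
      (∀ ω, ∀ c ∈ W, (∀ w ∈ W, ⟪A ω c, w⟫ = ⟪A ω u, w⟫) → c = Cu ω) := by
  haveI : CompleteSpace W := hW.completeSpace_coe
  set P : V →L[ℝ] W := W.orthogonalProjectionOnto with hP
  set S : (V →L[ℝ] V) → (W →L[ℝ] W) := fun T => P.comp (T.comp W.subtypeL) with hS
  have hSapp : ∀ T (x w : W), (⟪S T x, w⟫ : ℝ) = ⟪T x, (w : V)⟫ := by
    intro T x w
    simp only [hS, ContinuousLinearMap.comp_apply, Submodule.subtypeL_apply, hP]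
    exact Submodule.inner_orthogonalProjectionOnto_eq_of_mem_right (K := W) w (T x)
  have hScont : Continuous S :=
    (((ContinuousLinearMap.compL ℝ W V W) P).continuous).comp
      (((ContinuousLinearMap.compL ℝ W V V).flip W.subtypeL).continuous)
  -- each S (A ω) is a unit
  have hunit : ∀ ω, IsUnit (S (A ω)) := by
    intro ω
    set B : W →L[ℝ] W →L[ℝ] ℝ := (innerSL ℝ (E := W)).comp (S (A ω)) with hB
    have hcoB : IsCoercive B := by
      refine ⟨γ, hγ, fun x => ?_⟩
      calc γ * ‖x‖ * ‖x‖ = γ * ‖(x : V)‖ ^ 2 := by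
            rw [Submodule.norm_coe]; ring
        _ ≤ ⟪A ω x, (x : V)⟫ := hcoer ω x
        _ = B x x := by
            rw [hB, ContinuousLinearMap.comp_apply, innerSL_apply_apply, hSapp (A ω) x x]
    have hEq : (hcoB.continuousLinearEquivOfBilin : W →L[ℝ] W) = S (A ω) := by
      apply ContinuousLinearMap.ext
      intro x
      apply ext_inner_right ℝ
      intro w
      rw [ContinuousLinearEquiv.coe_coe, hcoB.continuousLinearEquivOfBilin_apply x w, hB,
        ContinuousLinearMap.comp_apply, innerSL_apply_apply]
    refine ⟨⟨S (A ω), (hcoB.continuousLinearEquivOfBilin.symm : W →L[ℝ] W), ?_, ?_⟩, rfl⟩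
    · rw [← hEq]; ext x; simp
    · rw [← hEq]; ext x; simp
  -- define the solution
  set g : (V →L[ℝ] V) → V := fun T => (Ring.inverse (S T) (P (T u)) : V) with hg
  set Cu : Ω → V := fun ω => g (A ω) with hCu
  have hsol : ∀ ω, S (A ω) (Ring.inverse (S (A ω)) (P (A ω u))) = P (A ω u) := by
    intro ω
    obtain ⟨v, hv⟩ := hunit ω
    rw [← hv, Ring.inverse_unit]
    calc (v : W →L[ℝ] W) (((v⁻¹ : (W →L[ℝ] W)ˣ) : W →L[ℝ] W) (P (A ω u)))
        = (((v : W →L[ℝ] W) * ((v⁻¹ : (W →L[ℝ] W)ˣ) : W →L[ℝ] W))) (P (A ω u)) := rfl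
      _ = P (A ω u) := by rw [v.mul_inv]; rfl
  have hmem : ∀ ω, Cu ω ∈ W := fun ω => (Ring.inverse (S (A ω)) (P (A ω u))).2
  have heq : ∀ ω, ∀ w ∈ W, ⟪A ω (Cu ω), w⟫ = ⟪A ω u, w⟫ := by
    intro ω w hw
    have h1 : (⟪S (A ω) (Ring.inverse (S (A ω)) (P (A ω u))), (⟨w, hw⟩ : W)⟫ : ℝ)
        = ⟪P (A ω u), (⟨w, hw⟩ : W)⟫ := by rw [hsol ω]
    rw [hSapp] at h1
    rw [hP, Submodule.inner_orthogonalProjectionOnto_eq_of_mem_right] at h1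
    exact h1
  have hsm : StronglyMeasurable Cu := by
    have hgcont : ∀ ω, ContinuousAt g (A ω) := by
      intro ω
      obtain ⟨v, hv⟩ := hunit ω
      have hinv : ContinuousAt (Ring.inverse : (W →L[ℝ] W) → (W →L[ℝ] W)) (S (A ω)) := by
        rw [← hv]; exact NormedRing.inverse_continuousAt (R := W →L[ℝ] W) v
      have h1 : ContinuousAt (fun T => Ring.inverse (S T)) (A ω) :=
        hinv.comp hScont.continuousAt
      have h2 : ContinuousAt (fun T : V →L[ℝ] V => P (T u)) (A ω) :=
        (P.continuous.comp (ContinuousLinearMap.apply ℝ V u).continuous).continuousAt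
      have h3 : ContinuousAt (fun T => Ring.inverse (S T) (P (T u))) (A ω) :=
        ContinuousAt.comp (f := fun T => (Ring.inverse (S T), P (T u)))
          (isBoundedBilinearMap_apply.continuous.continuousAt) (h1.prodMk h2)
      exact (W.subtypeL.continuous.continuousAt).comp h3
    exact ⟨fun n => (hA.approx n).map g, fun ω => ((hgcont ω).tendsto).comp (hA.tendsto_approx ω)⟩
  clear hsol hunit hSapp hScont
  clear_value Cu
  clear hCu hg g
  refine ⟨Cu, hsm, hmem, heq, ?_, ?_⟩
  · -- bound
    intro ω
    have hΓ : 0 < Γ := lt_of_lt_of_le hγ hγΓ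
    by_cases h0 : Cu ω = 0
    · rw [h0, norm_zero]; positivity
    have hnorm : 0 < ‖Cu ω‖ := norm_pos_iff.mpr h0
    have key : γ * ‖Cu ω‖ ^ 2 ≤ Γ * ‖u‖ * ‖Cu ω‖ := by
      calc γ * ‖Cu ω‖ ^ 2 ≤ ⟪A ω (Cu ω), Cu ω⟫ := hcoer ω _
        _ = ⟪A ω u, Cu ω⟫ := heq ω _ (hmem ω)
        _ ≤ ‖A ω u‖ * ‖Cu ω‖ := real_inner_le_norm _ _
        _ ≤ (Γ * ‖u‖) * ‖Cu ω‖ := by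
            apply mul_le_mul_of_nonneg_right _ (norm_nonneg _)
            exact le_trans ((A ω).le_opNorm u)
              (mul_le_mul_of_nonneg_right (hbdd ω) (norm_nonneg _))
    have hmain : γ * ‖Cu ω‖ ≤ Γ * ‖u‖ := by
      have h := (mul_le_mul_iff_left₀ hnorm).mp
        (by nlinarith [key] : γ * ‖Cu ω‖ * ‖Cu ω‖ ≤ Γ * ‖u‖ * ‖Cu ω‖)
      linarith
    rw [div_mul_eq_mul_div, le_div_iff₀ hγ]
    linarith
  · -- uniqueness
    intro ω c hc hceq
    have hdiff : ∀ w ∈ W, ⟪A ω (c - Cu ω), w⟫ = 0 := by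
      intro w hw
      rw [map_sub, inner_sub_left, hceq w hw, heq ω w hw, sub_self]
    have hle := hcoer ω (c - Cu ω)
    rw [hdiff _ (W.sub_mem hc (hmem ω))] at hle
    have h2 : ‖c - Cu ω‖ ^ 2 ≤ 0 := by
      have h := (mul_le_mul_iff_right₀ hγ).mp (le_trans hle (le_of_eq (mul_zero γ).symm))
      exact h
    have h3 : ‖c - Cu ω‖ ^ 2 = 0 := le_antisymm h2 (sq_nonneg _)
    have hz : c - Cu ω = 0 := by
      have := pow_eq_zero_iff (n := 2) (by norm_num) |>.mp h3
      exact norm_eq_zero.mp this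
    exact sub_eq_zero.mp hz
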